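/- Least action principle: fix a finite set V ⊂ ℤ^d, instruction stacks I, a configuration σ on V, and an odometer m. If an odometer m′ is produced by a sequence of acceptable topplings starting from (σ, m) that ends in a stable configuration, then m′(x) ≥ Odom_V(σ, m)(x) for every x ∈ V, where Odom_V(σ, m) is the stabilizing odometer obtained by toppling only unstable sites. -/

import Mathlib

/-!
Site-wise (Diaconis–Fulton) representation of Activated Random Walk,
following Rolla's survey and the paper
"The critical density of activated random walk is mean field in high dimension".
-/

open MeasureTheory ProbabilityTheory Filter
open scoped ENNReal

namespace ARW

/-- An instruction on a stack: either a sleep instruction, or a jump instruction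
labelled by a jump direction `l : L`. -/
inductive Instr (L : Type) : Type
  | sleep : Instr L
  | jump (l : L) : Instr L
  deriving DecidableEq

instance (L : Type) : MeasurableSpace (Instr L) := ⊤

/-- The state of a single site: `num n` means `n` active particles (and no sleeping
particle), `sleepy` means a single sleeping particle.  This realizes `ℕ ∪ {𝔰}`. -/
inductive SiteState : Type
  | num (n : ℕ) : SiteState
  | sleepy : SiteState
  deriving DecidableEq

instance : Inhabited SiteState := ⟨.num 0⟩
instance : MeasurableSpace SiteState := ⊤

/-- Total number of particles at a site (`|𝔰| = 1`). -/
def SiteState.count : SiteState → ℕ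
  | .num n => n
  | .sleepy => 1

/-- Number of *active* particles at a site. -/
def SiteState.numActive : SiteState → ℕ
  | .num n => n
  | .sleepy => 0

/-- Add one active particle to a site, waking a sleeping particle if present. -/
def SiteState.addActive : SiteState → SiteState
  | .num n => .num (n + 1)
  | .sleepy => .num 2

variable {X L : Type}

/-- Instruction stacks: an instruction for every site and stack position. -/
abbrev Stacks (X L : Type) := X → ℕ → Instr L

/-- A particle configuration `X → ℕ ∪ {𝔰}`. -/
abbrev Config (X : Type) := X → SiteState

/-- A state of the system: a configuration together with an odometer. -/
abbrev ARWState (X : Type) := Config X × (X → ℕ)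

/-- The all-active configuration associated to `σ : X → ℕ`. -/
def activeConfig (σ : X → ℕ) : Config X := fun x => .num (σ x)

/-- Topple site `x` (in `V`, with particles jumping out of `V` killed):
apply the next unused instruction of the stack at `x` and increment the odometer there.
A sleep instruction puts a lone (possibly just woken) particle to sleep and has no
effect when two or more particles are present; a jump instruction moves one particle
(waking it first if it was sleeping) to the target site, waking any sleeping particle
there. -/
def toppleAt [DecidableEq X] (tgt : X → L → X) (V : Finset X) (I : Stacks X L)
    (x : X) (s : ARWState X) : ARWState X :=
  let σ := s.1
  let σ₁ : Config X :=
    match I x (s.2 x) with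
    | .sleep => if σ x = .num 1 then Function.update σ x .sleepy else σ
    | .jump l =>
        let y := tgt x l
        let σ' := Function.update σ x (.num ((σ x).count - 1))
        if y ∈ V then Function.update σ' y ((σ' y).addActive) else σ'
  (σ₁, Function.update s.2 x (s.2 x + 1))

/-- Eligibility predicate for ordinary toppling: the site is unstable,
i.e. holds at least one active particle. -/
def unstableElig : X → SiteState → Prop := fun _ st => 1 ≤ st.numActive

/-- Eligibility predicate for weak toppling with respect to `U`: sites of `U` are
weakly unstable when they hold at least two active particles; other sites are
weakly unstable iff unstable. -/
def weakElig [DecidableEq X] (U : Finset X) : X → SiteState → Prop :=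
  fun x st => if x ∈ U then 2 ≤ st.numActive else 1 ≤ st.numActive

/-- Eligibility predicate for acceptable toppling: the site is nonempty. -/
def accElig : X → SiteState → Prop := fun _ st => 1 ≤ st.count

/-- One toppling step at some site of `V` that is eligible according to `elig`. -/
def ToppleStep [DecidableEq X] (tgt : X → L → X) (V : Finset X) (I : Stacks X L)
    (elig : X → SiteState → Prop) (s t : ARWState X) : Prop :=
  ∃ x ∈ V, elig x (s.1 x) ∧ t = toppleAt tgt V I x s

/-- Reachability by finitely many topplings of `elig`-eligible sites of `V`. -/
abbrev Reach [DecidableEq X] (tgt : X → L → X) (V : Finset X) (I : Stacks X L)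
    (elig : X → SiteState → Prop) : ARWState X → ARWState X → Prop :=
  Relation.ReflTransGen (ToppleStep tgt V I elig)

/-- A configuration is stable in `V` if no site of `V` holds an active particle. -/
def IsStable (V : Finset X) (σ : Config X) : Prop := ∀ x ∈ V, (σ x).numActive = 0

/-- A configuration is weakly stable in `V` w.r.t. `U` if no site of `V` is weakly
unstable (sites of `U` may hold a single active particle). -/
def IsWeaklyStable [DecidableEq X] (V U : Finset X) (σ : Config X) : Prop :=
  ∀ x ∈ V, ¬ weakElig U x (σ x)

/-- The stabilization of the state `s` in `V`: the state reached from `s` by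
toppling unstable sites of `V` until none remain.  (By the abelian property this
state is unique whenever it exists; `Classical.epsilon` selects it.)
Its first component is `Stab_V`, its second component is the odometer `Odom_V`. -/
noncomputable def stabState [DecidableEq X] (tgt : X → L → X) (V : Finset X)
    (I : Stacks X L) (s : ARWState X) : ARWState X :=
  Classical.epsilon fun t => Reach tgt V I unstableElig s t ∧ IsStable V t.1

/-- The weak stabilization of the state `s` in `V` with respect to `U`. -/
noncomputable def weakStabState [DecidableEq X] (tgt : X → L → X) (V U : Finset X)
    (I : Stacks X L) (s : ARWState X) : ARWState X :=
  Classical.epsilon fun t => Reach tgt V I (weakElig U) s t ∧ IsWeaklyStable V U t.1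

/-- The instruction stacks `I` admit weak stabilization on `V` w.r.t. `U` from every
state (this holds almost surely). -/
def WeakStabilizable [DecidableEq X] (tgt : X → L → X) (V U : Finset X)
    (I : Stacks X L) : Prop :=
  ∀ s : ARWState X, ∃ t, Reach tgt V I (weakElig U) s t ∧ IsWeaklyStable V U t.1

/-- The jump-out step at the origin `o`: acceptably topple the particle at `o`
(using the sleep instructions encountered, which put it to sleep and wake it again)
until it jumps out of `o`. -/
noncomputable def jumpOut [DecidableEq X] (tgt : X → L → X) (o : X) (V : Finset X)
    (I : Stacks X L) (s : ARWState X) : ARWState X :=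
  let ℓ := sInf {k | s.2 o ≤ k ∧ I o k ≠ Instr.sleep}
  toppleAt tgt V I o (s.1, Function.update s.2 o ℓ)

/-- The strong stabilization procedure started from `s0`: first weakly stabilize
w.r.t. `o` (the pre-step, index `0`), then repeatedly jump the particle out of the
origin and weakly stabilize again, stopping when the origin is empty. -/
noncomputable def strongSeq [DecidableEq X] (tgt : X → L → X) (o : X) (V : Finset X)
    (I : Stacks X L) (s0 : ARWState X) : ℕ → ARWState X
  | 0 => weakStabState tgt V {o} I s0
  | k + 1 =>
      if ((strongSeq tgt o V I s0 k).1 o).count = 0 then strongSeq tgt o V I s0 k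
      else weakStabState tgt V {o} I (jumpOut tgt o V I (strongSeq tgt o V I s0 k))

/-- `Ch`: the number of completed jump-out iterations in the strong stabilization
of the configuration `σ0` on `V` with respect to the origin `o`. -/
noncomputable def Ch [DecidableEq X] (tgt : X → L → X) (o : X) (V : Finset X)
    (I : Stacks X L) (σ0 : Config X) : ℕ :=
  sInf {k | ((strongSeq tgt o V I (σ0, fun _ => 0) k).1 o).count = 0}

/-- `ACh = max (Ch - 1) 0`: the number of additional chances. -/
noncomputable def ACh [DecidableEq X] (tgt : X → L → X) (o : X) (V : Finset X)
    (I : Stacks X L) (σ0 : Config X) : ℕ :=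
  Ch tgt o V I σ0 - 1

/-- The strong stabilizing odometer: the odometer at the end of the strong
stabilization procedure. -/
noncomputable def strongOdom [DecidableEq X] (tgt : X → L → X) (o : X) (V : Finset X)
    (I : Stacks X L) (σ0 : Config X) : X → ℕ :=
  (strongSeq tgt o V I (σ0, fun _ => 0) (Ch tgt o V I σ0)).2

/-- The odometer of the initial weak stabilization (pre-step). -/
noncomputable def weakOdom0 [DecidableEq X] (tgt : X → L → X) (o : X) (V : Finset X)
    (I : Stacks X L) (σ0 : Config X) : X → ℕ :=
  (strongSeq tgt o V I (σ0, fun _ => 0) 0).2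

/-- The number of closed walks of length `n` from `o` to `o` in the graph whose steps
are given by `tgt`. -/
noncomputable def closedWalkCount (tgt : X → L → X) (o : X) (n : ℕ) : ℕ :=
  Nat.card {f : Fin n → L // (List.ofFn f).foldl tgt o = o}

/-- The expected number of returns to `o` of the simple random walk (uniform steps
in `L`): `E[R] = ∑_{n ≥ 1} P(S_n = o)`, valued in `ℝ≥0∞`. -/
noncomputable def expReturns [Fintype L] (tgt : X → L → X) (o : X) : ℝ≥0∞ :=
  ∑' n : ℕ, (closedWalkCount tgt o (n + 1) : ℝ≥0∞) / (Fintype.card L : ℝ≥0∞) ^ (n + 1)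

/-- `I` is a family of i.i.d. ARW instruction stacks with sleep rate `lam` on the
probability space `(Ω, P)`: the entries are jointly independent, each entry is a
sleep instruction with probability `p_𝔰 = lam/(1+lam)` and any given jump instruction
with probability `p_j/deg` where `p_j = 1 - p_𝔰` and `deg = |L|`. -/
structure IsARWStacks [Fintype L] (lam : ℝ) {Ω : Type} [MeasurableSpace Ω]
    (P : Measure Ω) (I : Ω → Stacks X L) : Prop where
  meas : ∀ x k, Measurable fun ω => I ω x k
  indep : iIndepFun (β := fun _ : X × ℕ => Instr L)
    (fun p ω => I ω p.1 p.2) P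
  sleep_prob : ∀ x k, P {ω | I ω x k = Instr.sleep} = ENNReal.ofReal (lam / (1 + lam))
  jump_prob : ∀ x k l, P {ω | I ω x k = Instr.jump l}
      = ENNReal.ofReal ((1 - lam / (1 + lam)) / (Fintype.card L : ℝ))

/-- The full odometer `m_σ(x)` of the system on the whole (infinite) graph: the
supremum over finite `V` of the stabilizing odometers (these are nondecreasing
in `V`). -/
noncomputable def mOdomGen [DecidableEq X] (tgt : X → L → X) (I : Stacks X L)
    (σ0 : Config X) (x : X) : ℕ∞ :=
  ⨆ V : Finset X, ((stabState tgt V I (σ0, fun _ => 0)).2 x : ℕ∞)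

/-! ### The lattice `ℤ^d` -/

/-- Sites of `ℤ^d`. -/
abbrev SiteZ (d : ℕ) := Fin d → ℤ

/-- Jump directions in `ℤ^d`: a coordinate and a sign (`2d` of them). -/
abbrev Dir (d : ℕ) := Fin d × Bool

/-- The unit step in direction `p`. -/
def stepDir (d : ℕ) (p : Dir d) : SiteZ d :=
  Pi.single p.1 (if p.2 then (1 : ℤ) else -1)

/-- Nearest-neighbour jumps on `ℤ^d`. -/
def tgtZ (d : ℕ) : SiteZ d → Dir d → SiteZ d := fun x p => x + stepDir d p

/-- The origin of `ℤ^d`. -/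
def originZ (d : ℕ) : SiteZ d := 0

/-- The box `V_n = {-n, …, n}^d`. -/
noncomputable def BoxZ (d : ℕ) (n : ℕ) : Finset (SiteZ d) :=
  Finset.Icc (fun _ => -(n : ℤ)) (fun _ => (n : ℤ))

/-- The ball `B₁`: the origin together with its `2d` neighbours. -/
def ballOneZ (d : ℕ) : Finset (SiteZ d) :=
  insert (originZ d) (Finset.univ.image (stepDir d))

/-- `Stab_V σ` on `ℤ^d` (started from the zero odometer). -/
noncomputable def StabZ (d : ℕ) (V : Finset (SiteZ d)) (I : Stacks (SiteZ d) (Dir d))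
    (σ0 : Config (SiteZ d)) : Config (SiteZ d) :=
  (stabState (tgtZ d) V I (σ0, fun _ => 0)).1

/-- `Ch(σ, V)` on `ℤ^d`, w.r.t. the origin. -/
noncomputable def ChZ (d : ℕ) (V : Finset (SiteZ d)) (I : Stacks (SiteZ d) (Dir d))
    (σ0 : Config (SiteZ d)) : ℕ :=
  Ch (tgtZ d) (originZ d) V I σ0

/-- `ACh(σ, V) = max(Ch - 1, 0)` on `ℤ^d`. -/
noncomputable def AChZ (d : ℕ) (V : Finset (SiteZ d)) (I : Stacks (SiteZ d) (Dir d))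
    (σ0 : Config (SiteZ d)) : ℕ :=
  ACh (tgtZ d) (originZ d) V I σ0

/-- Strong stabilizing odometer on `ℤ^d`. -/
noncomputable def strongOdomZ (d : ℕ) (V : Finset (SiteZ d))
    (I : Stacks (SiteZ d) (Dir d)) (σ0 : Config (SiteZ d)) : SiteZ d → ℕ :=
  strongOdom (tgtZ d) (originZ d) V I σ0

/-- Odometer of the initial weak stabilization on `ℤ^d`. -/
noncomputable def weakOdom0Z (d : ℕ) (V : Finset (SiteZ d))
    (I : Stacks (SiteZ d) (Dir d)) (σ0 : Config (SiteZ d)) : SiteZ d → ℕ :=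
  weakOdom0 (tgtZ d) (originZ d) V I σ0

/-- `J₀(m)`: the number of pairs `(x, ℓ)` with `x ∼ 0`, `ℓ < m x`, such that the
instruction `I x ℓ` is a jump to the origin. -/
noncomputable def J0Z (d : ℕ) (I : Stacks (SiteZ d) (Dir d)) (m : SiteZ d → ℕ) : ℕ :=
  ∑ p : Dir d,
    ((Finset.range (m (stepDir d p))).filter
      fun ℓ => I (stepDir d p) ℓ = Instr.jump (p.1, !p.2)).card

/-- The full odometer `m_σ` on `ℤ^d`, as the nondecreasing limit of the stabilizing
odometers over the boxes `V_n`. -/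
noncomputable def mOdomZ (d : ℕ) (I : Stacks (SiteZ d) (Dir d)) (σ0 : Config (SiteZ d))
    (x : SiteZ d) : ℕ∞ :=
  ⨆ n : ℕ, ((stabState (tgtZ d) (BoxZ d n) I (σ0, fun _ => 0)).2 x : ℕ∞)

/-- The limiting stable configuration `Stab σ = lim_{V ↗ ℤ^d} Stab_V σ` (the eventual
value of `Stab_{V_n} σ` at `x` along the boxes; it exists a.s. on the fixation event). -/
noncomputable def stabLimitZ (d : ℕ) (I : Stacks (SiteZ d) (Dir d))
    (σ0 : Config (SiteZ d)) (x : SiteZ d) : SiteState :=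
  Classical.epsilon fun st =>
    ∀ᶠ n in atTop, (stabState (tgtZ d) (BoxZ d n) I (σ0, fun _ => 0)).1 x = st

/-- Translation of configurations of `ℤ^d` by `v`. -/
def shiftZ (d : ℕ) {α : Type} (v : SiteZ d) (σ : SiteZ d → α) : SiteZ d → α :=
  fun x => σ (x + v)

/-- A measure on configurations of `ℤ^d` is translation-ergodic if it is invariant
under all translations and every translation-invariant measurable set is trivial. -/
structure IsTransErgodicZ (d : ℕ) {α : Type} [MeasurableSpace α]
    (μ : Measure (SiteZ d → α)) : Prop where
  invariant : ∀ v : SiteZ d, μ.map (shiftZ d v) = μ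
  ergodic : ∀ A : Set (SiteZ d → α), MeasurableSet A →
    (∀ v : SiteZ d, shiftZ d v ⁻¹' A = A) → μ A = 0 ∨ μ A = 1

/-- `ASFixates d lam ρ`: every ARW system on `ℤ^d` with sleep rate `lam` started from
a translation-ergodic active configuration with mean `ρ`, independent of the
instruction stacks, almost surely fixates (in the sense that every site has a finite
odometer, which by Rolla–Tournier is equivalent to particle fixation). -/
def ASFixates (d : ℕ) (lam ρ : ℝ) : Prop :=
  ∀ (Ω : Type) (_ : MeasurableSpace Ω) (P : Measure Ω), IsProbabilityMeasure P →
    ∀ (I : Ω → Stacks (SiteZ d) (Dir d)) (η : Ω → SiteZ d → ℕ),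
      IsARWStacks lam P I → Measurable η → IndepFun η I P →
      IsTransErgodicZ d (P.map η) →
      (∫⁻ ω, (η ω (originZ d) : ℝ≥0∞) ∂P) = ENNReal.ofReal ρ →
      P {ω | ∀ x, mOdomZ d (I ω) (activeConfig (η ω)) x < ⊤} = 1

/-- The critical density `ρ_c(ℤ^d, λ)` of activated random walk on `ℤ^d`. -/
noncomputable def criticalDensity (d : ℕ) (lam : ℝ) : ℝ :=
  sSup {ρ : ℝ | 0 ≤ ρ ∧ ASFixates d lam ρ}

/-- `E[R(ℤ^d)]`: expected returns to the origin of simple random walk on `ℤ^d`. -/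
noncomputable def expReturnsZ (d : ℕ) : ℝ≥0∞ :=
  expReturns (tgtZ d) (originZ d)

end ARW

namespace ARW

variable {X L : Type} [DecidableEq X]

/-- The configuration part of a toppling, as a function of the instruction used. -/
def cfgStep (tgt : X → L → X) (V : Finset X) (x : X) (i : Instr L) (σ : Config X) :
    Config X :=
  match i with
  | .sleep => if σ x = .num 1 then Function.update σ x .sleepy else σ
  | .jump l =>
      let y := tgt x l
      let σ' := Function.update σ x (.num ((σ x).count - 1))
      if y ∈ V then Function.update σ' y ((σ' y).addActive) else σ'

lemma toppleAt_eq (tgt : X → L → X) (V : Finset X) (I : Stacks X L) (x : X)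
    (s : ARWState X) :
    toppleAt tgt V I x s
      = (cfgStep tgt V x (I x (s.2 x)) s.1, Function.update s.2 x (s.2 x + 1)) := rfl

lemma SiteState.count_le_addActive (st : SiteState) : st.count ≤ st.addActive.count := by
  cases st <;> simp [SiteState.count, SiteState.addActive]

lemma SiteState.numActive_le_addActive (st : SiteState) :
    st.numActive ≤ st.addActive.numActive := by
  cases st <;> simp [SiteState.numActive, SiteState.addActive]

lemma cfgStep_count_mono (tgt : X → L → X) (V : Finset X) (x : X) (i : Instr L)
    (σ : Config X) {z : X} (hz : z ≠ x) : (σ z).count ≤ (cfgStep tgt V x i σ z).count := by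
  cases i with
  | sleep =>
      simp only [cfgStep]
      split_ifs <;> simp [Function.update_of_ne hz]
  | jump l =>
      simp only [cfgStep]
      split_ifs with h
      · by_cases hzy : z = tgt x l
        · subst hzy
          simp [Function.update_self, Function.update_of_ne hz,
            SiteState.count_le_addActive]
        · simp [Function.update_of_ne hzy, Function.update_of_ne hz]
      · simp [Function.update_of_ne hz]

lemma cfgStep_numActive_mono (tgt : X → L → X) (V : Finset X) (x : X) (i : Instr L)
    (σ : Config X) {z : X} (hz : z ≠ x) :
    (σ z).numActive ≤ (cfgStep tgt V x i σ z).numActive := by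
  cases i with
  | sleep =>
      simp only [cfgStep]
      split_ifs <;> simp [Function.update_of_ne hz]
  | jump l =>
      simp only [cfgStep]
      split_ifs with h
      · by_cases hzy : z = tgt x l
        · subst hzy
          simp [Function.update_self, Function.update_of_ne hz,
            SiteState.numActive_le_addActive]
        · simp [Function.update_of_ne hzy, Function.update_of_ne hz]
      · simp [Function.update_of_ne hz]

end ARW

namespace ARW

variable {X L : Type} [DecidableEq X]

lemma SiteState.count_addActive (st : SiteState) : st.addActive.count = st.count + 1 := by
  cases st <;> rfl

lemma SiteState.addActive_num_sub {c : ℕ} (h : 1 ≤ c) :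
    (SiteState.num (c - 1)).addActive = SiteState.num c := by
  simp only [SiteState.addActive, SiteState.num.injEq]
  omega

lemma SiteState.addActive_ne_num_one (st : SiteState) (h : 1 ≤ st.count) :
    st.addActive ≠ SiteState.num 1 := by
  cases st <;> simp_all [SiteState.count, SiteState.addActive] <;> omega

lemma cfgStep_comm_sleep_sleep (tgt : X → L → X) (V : Finset X) {x y : X} (hxy : x ≠ y)
    (σ : Config X) :
    cfgStep tgt V y Instr.sleep (cfgStep tgt V x Instr.sleep σ)
      = cfgStep tgt V x Instr.sleep (cfgStep tgt V y Instr.sleep σ) := by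
  simp only [cfgStep]
  by_cases h1 : σ x = SiteState.num 1 <;> by_cases h2 : σ y = SiteState.num 1 <;>
    simp [h1, h2, Function.update_of_ne hxy, Function.update_of_ne hxy.symm,
      Function.update_comm hxy]

end ARW

namespace ARW

variable {X L : Type} [DecidableEq X]

lemma cfgStep_comm_sleep_jump (tgt : X → L → X) (V : Finset X) {x y : X} (hxy : x ≠ y)
    (ly : L) (σ : Config X) (hx : 1 ≤ (σ x).count) :
    cfgStep tgt V y (Instr.jump ly) (cfgStep tgt V x Instr.sleep σ)
      = cfgStep tgt V x Instr.sleep (cfgStep tgt V y (Instr.jump ly) σ) := by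
  have hne := SiteState.addActive_ne_num_one (σ x) hx
  simp only [cfgStep]
  obtain ⟨t, ht⟩ : ∃ t, tgt y ly = t := ⟨_, rfl⟩
  simp only [ht]
  clear ht
  rcases eq_or_ne t x with rfl | htx
  · by_cases hv : t ∈ V <;> by_cases h1 : σ t = SiteState.num 1 <;>
      funext z <;>
      by_cases hzx : z = t <;> by_cases hzy : z = y <;>
      simp_all [Function.update_apply, SiteState.count, SiteState.addActive,
        Ne.symm hxy, hxy]
  · rcases eq_or_ne t y with rfl | hty
    · by_cases hv : t ∈ V <;> by_cases h1 : σ x = SiteState.num 1 <;>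
        funext z <;>
        by_cases hzx : z = x <;> by_cases hzy : z = t <;>
        simp_all [Function.update_apply, SiteState.count, SiteState.addActive,
          Ne.symm hxy, hxy, htx, Ne.symm htx]
    · by_cases hv : t ∈ V <;> by_cases h1 : σ x = SiteState.num 1 <;>
        funext z <;>
        by_cases hzx : z = x <;> by_cases hzy : z = y <;> by_cases hzt : z = t <;>
        simp_all [Function.update_apply, SiteState.count, SiteState.addActive,
          Ne.symm hxy, hxy, htx, Ne.symm htx, hty, Ne.symm hty]

end ARW

namespace ARW

variable {X L : Type} [DecidableEq X]

lemma SiteState.addActive_num (n : ℕ) : (SiteState.num n).addActive = .num (n + 1) := rfl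
lemma SiteState.count_num (n : ℕ) : (SiteState.num n).count = n := rfl

set_option maxHeartbeats 1000000 in
lemma cfgStep_comm_jump_jump (tgt : X → L → X) (V : Finset X) {x y : X} (hxy : x ≠ y)
    (lx ly : L) (σ : Config X) (hx : 1 ≤ (σ x).count) (hy : 1 ≤ (σ y).count) :
    cfgStep tgt V y (Instr.jump ly) (cfgStep tgt V x (Instr.jump lx) σ)
      = cfgStep tgt V x (Instr.jump lx) (cfgStep tgt V y (Instr.jump ly) σ) := by
  simp only [cfgStep]
  generalize tgt x lx = a
  generalize tgt y ly = b
  funext z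
  simp only [Function.update_apply]
  split_ifs <;> (try subst_vars) <;>
    (try simp_all [Function.update_apply, SiteState.count_addActive,
      SiteState.addActive_num, SiteState.count_num, Ne.symm hxy]) <;>
    (try split_ifs) <;> (try subst_vars) <;>
    (try simp_all [Function.update_apply, SiteState.count_addActive,
      SiteState.addActive_num, SiteState.count_num, Ne.symm hxy]) <;>
    omega

end ARW

namespace ARW

variable {X L : Type} [DecidableEq X]

lemma cfgStep_comm (tgt : X → L → X) (V : Finset X) {x y : X} (hxy : x ≠ y)
    (ix iy : Instr L) (σ : Config X) (hx : 1 ≤ (σ x).count) (hy : 1 ≤ (σ y).count) :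
    cfgStep tgt V y iy (cfgStep tgt V x ix σ)
      = cfgStep tgt V x ix (cfgStep tgt V y iy σ) := by
  cases ix with
  | sleep =>
      cases iy with
      | sleep => exact cfgStep_comm_sleep_sleep tgt V hxy σ
      | jump ly => exact cfgStep_comm_sleep_jump tgt V hxy ly σ hx
  | jump lx =>
      cases iy with
      | sleep => exact (cfgStep_comm_sleep_jump tgt V hxy.symm lx σ hy).symm
      | jump ly => exact cfgStep_comm_jump_jump tgt V hxy lx ly σ hx hy

lemma toppleAt_comm (tgt : X → L → X) (V : Finset X) (I : Stacks X L) {x y : X}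
    (hxy : x ≠ y) (s : ARWState X) (hx : 1 ≤ (s.1 x).count) (hy : 1 ≤ (s.1 y).count) :
    toppleAt tgt V I y (toppleAt tgt V I x s) = toppleAt tgt V I x (toppleAt tgt V I y s) := by
  simp only [toppleAt_eq, Function.update_of_ne hxy, Function.update_of_ne (Ne.symm hxy),
    Prod.mk.injEq]
  exact ⟨cfgStep_comm tgt V hxy _ _ s.1 hx hy, Function.update_comm hxy _ _ _⟩

/-- A toppling sequence: each listed site is in `V` and eligible when toppled. -/
inductive Seq {X L : Type} [DecidableEq X] (tgt : X → L → X) (V : Finset X)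
    (I : Stacks X L) (elig : X → SiteState → Prop) :
    ARWState X → List X → ARWState X → Prop
  | nil (s : ARWState X) : Seq tgt V I elig s List.nil s
  | cons {s t : ARWState X} {β : List X} (x : X) (hxV : x ∈ V) (hx : elig x (s.1 x))
      (h : Seq tgt V I elig (toppleAt tgt V I x s) β t) : Seq tgt V I elig s (x :: β) t

variable {tgt : X → L → X} {V : Finset X} {I : Stacks X L} {elig : X → SiteState → Prop}

lemma Seq.append {s m t : ARWState X} {β₁ β₂ : List X}
    (h1 : Seq tgt V I elig s β₁ m) (h2 : Seq tgt V I elig m β₂ t) :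
    Seq tgt V I elig s (β₁ ++ β₂) t := by
  induction h1 with
  | nil => simpa using h2
  | cons x hxV hx h ih => exact Seq.cons x hxV hx (ih h2)

lemma Seq.split {s t : ARWState X} {β₁ β₂ : List X}
    (h : Seq tgt V I elig s (β₁ ++ β₂) t) :
    ∃ m, Seq tgt V I elig s β₁ m ∧ Seq tgt V I elig m β₂ t := by
  induction β₁ generalizing s with
  | nil => exact ⟨s, Seq.nil s, by simpa using h⟩
  | cons x β₁ ih =>
      rcases h with _ | ⟨x, hxV, hx, h⟩
      obtain ⟨m, hm1, hm2⟩ := ih h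
      exact ⟨m, Seq.cons x hxV hx hm1, hm2⟩

lemma reach_exists_seq {s t : ARWState X} (h : Reach tgt V I elig s t) :
    ∃ β, Seq tgt V I elig s β t := by
  induction h with
  | refl => exact ⟨[], Seq.nil s⟩
  | tail _ hstep ih =>
      obtain ⟨β, hβ⟩ := ih
      obtain ⟨x, hxV, hx, rfl⟩ := hstep
      exact ⟨β ++ [x], hβ.append (Seq.cons x hxV hx (Seq.nil _))⟩

lemma Seq.odom {s t : ARWState X} {β : List X} (h : Seq tgt V I elig s β t) (z : X) :
    t.2 z = s.2 z + β.count z := by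
  induction h with
  | nil => simp
  | @cons s t β x hxV hx h ih =>
      have h2 : (toppleAt tgt V I x s).2 z = if z = x then s.2 z + 1 else s.2 z := by
        simp only [toppleAt_eq, Function.update_apply]
        split_ifs with hh
        · rw [hh]
        · rfl
      rw [ih, h2, List.count_cons]
      by_cases hzx : z = x
      · simp [hzx]
        omega
      · simp [hzx, Ne.symm hzx]

lemma Seq.count_mono {s t : ARWState X} {β : List X} (h : Seq tgt V I elig s β t)
    {z : X} (hz : z ∉ β) : (s.1 z).count ≤ (t.1 z).count := by
  induction h with
  | nil => exact le_refl _
  | @cons s t β x hxV hx h ih =>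
      have hzx : z ≠ x := fun hzx => hz (hzx ▸ List.mem_cons_self)
      refine le_trans ?_ (ih (fun hm => hz (List.mem_cons_of_mem x hm)))
      simpa [toppleAt_eq] using cfgStep_count_mono tgt V x (I x (s.2 x)) s.1 hzx

lemma Seq.numActive_mono {s t : ARWState X} {β : List X} (h : Seq tgt V I elig s β t)
    {z : X} (hz : z ∉ β) : (s.1 z).numActive ≤ (t.1 z).numActive := by
  induction h with
  | nil => exact le_refl _
  | @cons s t β x hxV hx h ih =>
      have hzx : z ≠ x := fun hzx => hz (hzx ▸ List.mem_cons_self)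
      refine le_trans ?_ (ih (fun hm => hz (List.mem_cons_of_mem x hm)))
      simpa [toppleAt_eq] using cfgStep_numActive_mono tgt V x (I x (s.2 x)) s.1 hzx

end ARW

namespace ARW

variable {X L : Type} [DecidableEq X]
variable {tgt : X → L → X} {V : Finset X} {I : Stacks X L}

lemma SiteState.numActive_le_count (st : SiteState) : st.numActive ≤ st.count := by
  cases st <;> simp [SiteState.numActive, SiteState.count]

lemma Seq.shift {s t : ARWState X} {β : List X} (h : Seq tgt V I accElig s β t)
    {x : X} (hxβ : x ∉ β) (hx : 1 ≤ (s.1 x).count) :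
    Seq tgt V I accElig (toppleAt tgt V I x s) β (toppleAt tgt V I x t) := by
  induction h with
  | nil => exact Seq.nil _
  | @cons s t β y hyV hy h ih =>
      have hxy : x ≠ y := fun hxy => hxβ (hxy ▸ List.mem_cons_self)
      have hy0 : 1 ≤ (s.1 y).count := hy
      have hy' : accElig y ((toppleAt tgt V I x s).1 y) := by
        refine le_trans hy0 ?_
        simpa [toppleAt_eq] using cfgStep_count_mono tgt V x (I x (s.2 x)) s.1 hxy.symm
      have hx' : 1 ≤ ((toppleAt tgt V I y s).1 x).count := by
        refine le_trans hx ?_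
        simpa [toppleAt_eq] using cfgStep_count_mono tgt V y (I y (s.2 y)) s.1 hxy
      have hrec := ih (fun hm => hxβ (List.mem_cons_of_mem y hm)) hx'
      exact Seq.cons y hyV hy' ((toppleAt_comm tgt V I hxy s hx hy0) ▸ hrec)

lemma exists_split_first {a : X} : ∀ {l : List X}, a ∈ l →
    ∃ l₁ l₂, l = l₁ ++ a :: l₂ ∧ a ∉ l₁ := by
  intro l h
  induction l with
  | nil => cases h
  | cons b l ih =>
      by_cases hab : a = b
      · exact ⟨[], l, by rw [hab]; rfl, by simp⟩
      · obtain ⟨l₁, l₂, rfl, hn⟩ := ih (List.mem_of_ne_of_mem hab h)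
        exact ⟨b :: l₁, l₂, rfl, by simp [hab, hn]⟩

lemma count_le_of_stable (α : List X) :
    ∀ (β : List X) (s t u : ARWState X), Seq tgt V I accElig s β t → IsStable V t.1 →
      Seq tgt V I unstableElig s α u → ∀ z, α.count z ≤ β.count z := by
  induction α with
  | nil => intro β s t u _ _ _ z; simp
  | cons a α ih =>
      intro β s t u hβ hst hα z
      cases hα with
      | cons _ haV ha hα' =>
        have ha1 : 1 ≤ (s.1 a).numActive := ha
        have haβ : a ∈ β := by
          by_contra hmem
          have hmono := hβ.numActive_mono hmem
          have h0 := hst a haV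
          omega
        obtain ⟨β₁, β₂, rfl, hnot⟩ := exists_split_first haβ
        obtain ⟨m, h1, h2⟩ := hβ.split
        cases h2 with
        | cons _ haV' ham h2' =>
          have hcount : 1 ≤ (s.1 a).count :=
            le_trans ha1 (SiteState.numActive_le_count _)
          have hfull : Seq tgt V I accElig (toppleAt tgt V I a s) (β₁ ++ β₂) t :=
            (h1.shift hnot hcount).append h2'
          have key := ih (β₁ ++ β₂) _ t u hfull hst hα' z
          simp only [List.count_cons, List.count_append] at key ⊢
          by_cases hza : z = a <;> simp [hza] at key ⊢ <;> omega

end ARW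

namespace ARW

/-- **Least action principle.**  Fix a finite `V ⊂ ℤ^d`, instruction stacks `I`, and
a starting state `s = (σ, m)`.  If the state `t` is produced from `s` by a sequence of
acceptable topplings ending in a stable configuration and `u` is produced from `s` by
toppling only unstable sites, ending in a stable configuration (so that `u.2` is the
stabilizing odometer `Odom_V (σ, m)`), then `t.2 x ≥ u.2 x` for every `x ∈ V`. -/
theorem least_action_principle (d : ℕ) (V : Finset (SiteZ d))
    (I : Stacks (SiteZ d) (Dir d)) (s t u : ARWState (SiteZ d))
    (ht : Reach (tgtZ d) V I accElig s t) (hts : IsStable V t.1)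
    (hu : Reach (tgtZ d) V I unstableElig s u) (hus : IsStable V u.1) :
    ∀ x ∈ V, u.2 x ≤ t.2 x := by
  intro x hxV
  obtain ⟨β, hβ⟩ := reach_exists_seq ht
  obtain ⟨α, hα⟩ := reach_exists_seq hu
  have hc := count_le_of_stable α β s t u hβ hts hα x
  have h1 := hβ.odom x
  have h2 := hα.odom x
  omega

end ARW
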